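/- With the hypotheses of the previous setup (σ(a) - W*π(a)W compact, π(a)(WW* - 1) compact, [F, σ(a)] compact for all a ∈ A), the commutator [WFW*, π(a)] is compact for every a ∈ A. -/
import Mathlib

open Metric Set

lemma clm_mul_compact_left {H : Type*} [NormedAddCommGroup H] [InnerProductSpace ℂ H]
    {f : H →L[ℂ] H} (g : H →L[ℂ] H) (hf : IsCompactOperator ⇑f) :
    IsCompactOperator ⇑(f * g) := hf.comp_clm g

lemma clm_mul_compact_right {H : Type*} [NormedAddCommGroup H] [InnerProductSpace ℂ H]
    (f : H →L[ℂ] H) {g : H →L[ℂ] H} (hg : IsCompactOperator ⇑g) :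
    IsCompactOperator ⇑(f * g) := hg.clm_comp f

lemma compact_of_star_mul_self {H : Type*} [NormedAddCommGroup H] [InnerProductSpace ℂ H]
    [CompleteSpace H] (T : H →L[ℂ] H) (h : IsCompactOperator ⇑(star T * T)) :
    IsCompactOperator ⇑T := by
  set S := star T * T with hS
  have est : ∀ u : H, ‖T u‖ ^ 2 ≤ ‖S u‖ * ‖u‖ := by
    intro u
    have h1 : (‖T u‖ : ℝ) ^ 2 = RCLike.re (inner (𝕜 := ℂ) (S u) u) := by
      have h2 : inner (𝕜 := ℂ) (S u) u = inner (𝕜 := ℂ) (T u) (T u) := by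
        simp [hS, ContinuousLinearMap.mul_apply, ContinuousLinearMap.star_eq_adjoint,
          ContinuousLinearMap.adjoint_inner_left]
      rw [h2, inner_self_eq_norm_sq]
    rw [h1]
    calc RCLike.re (inner (𝕜 := ℂ) (S u) u) ≤ ‖inner (𝕜 := ℂ) (S u) u‖ := RCLike.re_le_norm _
      _ ≤ ‖S u‖ * ‖u‖ := norm_inner_le_norm _ _
  -- total boundedness of T '' closedBall 0 1
  have hSB : TotallyBounded (⇑S '' closedBall 0 1) := by
    have := h.isCompact_closure_image_of_bounded (isBounded_closedBall (x := (0:H)) (r := 1))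
    exact this.totallyBounded.subset subset_closure
  have hTB : TotallyBounded (⇑T '' closedBall 0 1) := by
    rw [Metric.totallyBounded_iff]
    intro ε hε
    have hε2 : 0 < ε ^ 2 / 2 := by positivity
    obtain ⟨t, hts, htf, hcov⟩ := hSB.exists_subset (Metric.dist_mem_uniformity hε2)
    have hpick : ∀ y ∈ t, ∃ x, x ∈ closedBall (0:H) 1 ∧ S x = y := by
      intro y hy; obtain ⟨x, hx, hxy⟩ := hts hy; exact ⟨x, hx, hxy⟩
    choose! g hg1 hg2 using hpick
    refine ⟨(fun y => T (g y)) '' t, htf.image _, ?_⟩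
    rintro _ ⟨x, hx, rfl⟩
    have hx' : S x ∈ ⋃ y ∈ t, {z | (z, y) ∈ {p : H × H | dist p.1 p.2 < ε ^ 2 / 2}} :=
      hcov (mem_image_of_mem _ hx)
    simp only [mem_iUnion, mem_setOf_eq] at hx'
    obtain ⟨y, hy, hdist⟩ := hx'
    refine mem_biUnion (mem_image_of_mem _ hy) ?_
    rw [mem_ball, dist_eq_norm, ← map_sub]
    have hb1 : ‖x‖ ≤ 1 := by simpa using hx
    have hb2 : ‖g y‖ ≤ 1 := by simpa using hg1 y hy
    have key : ‖T (x - g y)‖ ^ 2 < ε ^ 2 := by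
      calc ‖T (x - g y)‖ ^ 2 ≤ ‖S (x - g y)‖ * ‖x - g y‖ := est _
        _ ≤ ‖S x - S (g y)‖ * 2 := by
            rw [map_sub]
            refine mul_le_mul_of_nonneg_left ?_ (norm_nonneg _)
            calc ‖x - g y‖ ≤ ‖x‖ + ‖g y‖ := norm_sub_le _ _
              _ ≤ 2 := by linarith
        _ < ε ^ 2 / 2 * 2 := by
            have : ‖S x - S (g y)‖ < ε ^ 2 / 2 := by
              rw [← dist_eq_norm, hg2 y hy] at *
              simpa [dist_eq_norm, hg2 y hy] using hdist
            nlinarith [norm_nonneg (S x - S (g y))]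
        _ = ε ^ 2 := by ring
    exact lt_of_pow_lt_pow_left₀ 2 hε.le key
  refine ⟨closure (⇑T '' closedBall 0 1), ?_, ?_⟩
  · rw [isCompact_iff_totallyBounded_isComplete]
    exact ⟨hTB.closure, isClosed_closure.isComplete⟩
  · exact Filter.mem_of_superset (closedBall_mem_nhds (0:H) one_pos)
      (fun x hx => subset_closure (mem_image_of_mem _ hx))

section Helpers
variable {H : Type*} [NormedAddCommGroup H] [InnerProductSpace ℂ H]

lemma compact_clm_neg {f : H →L[ℂ] H} (hf : IsCompactOperator ⇑f) :
    IsCompactOperator ⇑(-f) := by simpa [ContinuousLinearMap.coe_neg] using hf.neg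

lemma compact_clm_add {f g : H →L[ℂ] H} (hf : IsCompactOperator ⇑f)
    (hg : IsCompactOperator ⇑g) : IsCompactOperator ⇑(f + g) := by
  simpa [ContinuousLinearMap.coe_add] using hf.add hg

lemma compact_clm_sub {f g : H →L[ℂ] H} (hf : IsCompactOperator ⇑f)
    (hg : IsCompactOperator ⇑g) : IsCompactOperator ⇑(f - g) := by
  simpa [ContinuousLinearMap.coe_sub] using hf.sub hg

lemma compact_clm_congr {f g : H →L[ℂ] H} (h : f = g) (hf : IsCompactOperator ⇑f) :
    IsCompactOperator ⇑g := h ▸ hf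

end Helpers


/-- Let `π, σ` be representations of a C*-algebra `A` on a Hilbert space `H`, `W` an
isometry with `σ(a) - W*π(a)W` compact and `π(a)(WW* - 1)` compact for all `a`, and `F`
a bounded operator with `[F, σ(a)]` compact for all `a`. Then the commutator
`[WFW*, π(a)]` is compact for every `a ∈ A`. -/
theorem commutator_conjugated_operator_compact
    {H : Type*} [NormedAddCommGroup H] [InnerProductSpace ℂ H] [CompleteSpace H]
    {A : Type*} [NormedRing A] [StarRing A] [CStarRing A] [NormedAlgebra ℂ A]
    [StarModule ℂ A] [CompleteSpace A]
    (π σ : A →⋆ₐ[ℂ] (H →L[ℂ] H))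
    (W : H →L[ℂ] H) (hW : star W * W = 1)
    (h₁ : ∀ a : A, IsCompactOperator ⇑(σ a - star W * π a * W))
    (h₂ : ∀ a : A, IsCompactOperator ⇑(π a * (W * star W - 1)))
    (F : H →L[ℂ] H)
    (h₃ : ∀ a : A, IsCompactOperator ⇑(F * σ a - σ a * F)) :
    ∀ a : A, IsCompactOperator
      ⇑((W * F * star W) * π a - π a * (W * F * star W)) := by
  intro a
  -- (W W* - 1) π a is compact : via the star trick
  have hleft : ∀ b : A, IsCompactOperator ⇑((W * star W - 1) * π b) := by
    intro b
    apply compact_of_star_mul_self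
    have hstar : star ((W * star W - 1) * π b)
        = π (star b) * (W * star W - 1) := by
      simp [star_sub, star_mul, mul_assoc, map_star]
    rw [hstar]
    exact clm_mul_compact_left _ (h₂ (star b))
  -- star W * π a - σ a * star W compact
  have hA : IsCompactOperator ⇑(star W * π a - σ a * star W) := by
    have e : star W * π a - σ a * star W
        = (star W * π a * W - σ a) * star W - star W * (π a * (W * star W - 1)) := by
      noncomm_ring
    rw [e]
    refine compact_clm_sub (clm_mul_compact_left _ ?_) (clm_mul_compact_right _ (h₂ a))
    rw [show star W * π a * W - σ a = -(σ a - star W * π a * W) from (neg_sub _ _).symm]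
    exact compact_clm_neg (h₁ a)
  -- W σ a - π a W compact
  have hB : IsCompactOperator ⇑(W * σ a - π a * W) := by
    have e : W * σ a - π a * W
        = W * (σ a - star W * π a * W) + ((W * star W - 1) * π a) * W := by
      noncomm_ring
    rw [e]
    exact compact_clm_add (clm_mul_compact_right _ (h₁ a)) (clm_mul_compact_left _ (hleft a))
  have key : (W * F * star W) * π a - π a * (W * F * star W)
      = W * F * (star W * π a - σ a * star W) + W * (F * σ a - σ a * F) * star W
        + (W * σ a - π a * W) * (F * star W) := by
    noncomm_ring
  rw [key]
  refine compact_clm_add (compact_clm_add ?_ ?_) ?_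
  · exact clm_mul_compact_right _ hA
  · exact clm_mul_compact_left _ (clm_mul_compact_right _ (h₃ a))
  · exact clm_mul_compact_left _ hB
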